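/- For all real x ≠ 0, ∫₀^π θ sin θ / (1 + x² cos² θ) dθ = (π/x) · arctan(x). -/

import Mathlib

theorem stmt_6 (x : ℝ) (hx0 : x ≠ 0) :
    ∫ θ in (0:ℝ)..Real.pi, θ * Real.sin θ / (1 + x ^ 2 * Real.cos θ ^ 2)
      = Real.pi / x * Real.arctan x := by
  have hD : ∀ θ : ℝ, 1 + x ^ 2 * Real.cos θ ^ 2 ≠ 0 := by
    intro θ
    positivity
  have hcont : Continuous (fun θ : ℝ => Real.sin θ / (1 + x ^ 2 * Real.cos θ ^ 2)) :=
    Continuous.div (by continuity) (by continuity) hD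
  have hcont2 : Continuous (fun θ : ℝ => θ * Real.sin θ / (1 + x ^ 2 * Real.cos θ ^ 2)) :=
    Continuous.div (by continuity) (by continuity) hD
  have key : ∫ θ in (0:ℝ)..Real.pi, Real.sin θ / (1 + x ^ 2 * Real.cos θ ^ 2)
      = 2 / x * Real.arctan x := by
    have hderiv : ∀ θ ∈ Set.uIcc (0:ℝ) Real.pi,
        HasDerivAt (fun θ => -(1/x) * Real.arctan (x * Real.cos θ))
          (Real.sin θ / (1 + x ^ 2 * Real.cos θ ^ 2)) θ := by
      intro θ _
      have h1 : HasDerivAt (fun θ : ℝ => x * Real.cos θ) (x * (-Real.sin θ)) θ :=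
        (Real.hasDerivAt_cos θ).const_mul x
      have h2 := h1.arctan
      have h3 := h2.const_mul (-(1/x))
      refine h3.congr_deriv ?_
      have hsq : (x * Real.cos θ) ^ 2 = x ^ 2 * Real.cos θ ^ 2 := by ring
      rw [hsq]
      field_simp
    rw [intervalIntegral.integral_eq_sub_of_hasDerivAt hderiv
      (hcont.intervalIntegrable _ _)]
    simp [Real.cos_pi, Real.arctan_neg]
    field_simp
    ring
  have hsym : (∫ θ in (0:ℝ)..Real.pi, θ * Real.sin θ / (1 + x ^ 2 * Real.cos θ ^ 2))
      = ∫ θ in (0:ℝ)..Real.pi,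
        (Real.pi - θ) * Real.sin θ / (1 + x ^ 2 * Real.cos θ ^ 2) := by
    have h := intervalIntegral.integral_comp_sub_left (a := 0) (b := Real.pi)
      (fun θ => θ * Real.sin θ / (1 + x ^ 2 * Real.cos θ ^ 2)) Real.pi
    simp only [Real.sin_pi_sub, Real.cos_pi_sub, neg_sq, sub_self, sub_zero] at h
    exact h.symm
  have hsplit : (∫ θ in (0:ℝ)..Real.pi,
        (Real.pi - θ) * Real.sin θ / (1 + x ^ 2 * Real.cos θ ^ 2))
      = Real.pi * (2 / x * Real.arctan x)
        - ∫ θ in (0:ℝ)..Real.pi, θ * Real.sin θ / (1 + x ^ 2 * Real.cos θ ^ 2) := by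
    have : (fun θ : ℝ => (Real.pi - θ) * Real.sin θ / (1 + x ^ 2 * Real.cos θ ^ 2))
        = fun θ : ℝ => Real.pi * (Real.sin θ / (1 + x ^ 2 * Real.cos θ ^ 2))
          - θ * Real.sin θ / (1 + x ^ 2 * Real.cos θ ^ 2) := by
      funext θ
      field_simp
    rw [this, intervalIntegral.integral_sub (f := fun θ : ℝ => Real.pi * (Real.sin θ / (1 + x ^ 2 * Real.cos θ ^ 2)))
      ((continuous_const.mul hcont : Continuous (fun θ : ℝ => Real.pi * (Real.sin θ / (1 + x ^ 2 * Real.cos θ ^ 2)))).intervalIntegrable _ _)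
      (hcont2.intervalIntegrable _ _),
      intervalIntegral.integral_const_mul, key]
  have := hsym.trans hsplit
  have harctan := Real.arctan x
  field_simp at this ⊢
  linarith
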